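/- If every loss f_i is twice continuously differentiable, then for any t ∈ ℝ and θ ∈ ℝ^d the Hessian of the t-tilted loss equals ∇²_{θθ} R̃(t;θ) = t·Σ_{i=1}^N w_i(t;θ)·(∇f_i(θ) − ∇_θR̃(t;θ))·(∇f_i(θ) − ∇_θR̃(t;θ))ᵀ + Σ_{i=1}^N w_i(t;θ)·∇²f_i(θ), where w_i(t;θ) = exp(t·f_i(θ)) / Σ_{j=1}^N exp(t·f_j(θ)). -/

import Mathlib

open Real Finset

/-- The `t`-tilted empirical loss: for `t ≠ 0`,
`R̃(t;θ) = (1/t) · log((1/N) · Σᵢ exp(t · fᵢ(θ)))`, and `R̃(0;θ) = (1/N) · Σᵢ fᵢ(θ)`. -/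
noncomputable def tiltedLoss {d N : ℕ} (f : Fin N → EuclideanSpace ℝ (Fin d) → ℝ) (t : ℝ)
    (θ : EuclideanSpace ℝ (Fin d)) : ℝ :=
  if t = 0 then (1 / (N : ℝ)) * ∑ i, f i θ
  else (1 / t) * Real.log ((1 / (N : ℝ)) * ∑ i, Real.exp (t * f i θ))

lemma tilted_hasFDerivAt {d N : ℕ} (hN : 0 < N) (f : Fin N → EuclideanSpace ℝ (Fin d) → ℝ)
    (hf : ∀ i, Differentiable ℝ (f i)) (t : ℝ) (x : EuclideanSpace ℝ (Fin d)) :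
    HasFDerivAt (tiltedLoss f t)
      (∑ i, (Real.exp (t * f i x) / ∑ j, Real.exp (t * f j x)) • fderiv ℝ (f i) x) x := by
  have hS : (0:ℝ) < ∑ j, Real.exp (t * f j x) :=
    by
      have : Nonempty (Fin N) := Fin.pos_iff_nonempty.mp hN
      exact Finset.sum_pos (fun j _ => Real.exp_pos _) Finset.univ_nonempty
  rcases eq_or_ne t 0 with rfl | ht
  · have : tiltedLoss f 0 = fun x => (1 / (N:ℝ)) * ∑ i, f i x := by
      funext x; simp [tiltedLoss]
    rw [this]
    have hsum : HasFDerivAt (fun x => ∑ i, f i x) (∑ i, fderiv ℝ (f i) x) x :=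
      HasFDerivAt.fun_sum (fun i _ => ((hf i) x).hasFDerivAt)
    have := hsum.const_mul (1 / (N:ℝ))
    refine this.congr_fderiv (Eq.symm ?_)
    rw [Finset.smul_sum]
    refine Finset.sum_congr rfl fun i _ => ?_
    simp
  · have hlt : tiltedLoss f t = fun x => (1/t) * Real.log ((1 / (N : ℝ)) * ∑ i, Real.exp (t * f i x)) := by
      funext x; simp [tiltedLoss, ht]
    rw [hlt]
    have hS' : HasFDerivAt (fun x => (1 / (N : ℝ)) * ∑ i, Real.exp (t * f i x))
        ((1/(N:ℝ)) • ∑ i, Real.exp (t * f i x) • (t • fderiv ℝ (f i) x)) x := by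
      refine HasFDerivAt.const_mul ?_ _
      exact HasFDerivAt.fun_sum (fun i _ => (((hf i) x).hasFDerivAt.const_mul t).exp)
    have hne : (1 / (N : ℝ)) * ∑ i, Real.exp (t * f i x) ≠ 0 := by positivity
    have := (hS'.log hne).const_mul (1/t)
    refine this.congr_fderiv (Eq.symm ?_)
    rw [Finset.smul_sum, Finset.smul_sum, Finset.smul_sum]
    refine Finset.sum_congr rfl fun i _ => ?_
    rw [smul_smul, smul_smul, smul_smul, smul_smul]
    congr 1
    field_simp

lemma tilted_gradient_eq {d N : ℕ} (hN : 0 < N) (f : Fin N → EuclideanSpace ℝ (Fin d) → ℝ)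
    (hf : ∀ i, Differentiable ℝ (f i)) (t : ℝ) (x : EuclideanSpace ℝ (Fin d)) :
    gradient (tiltedLoss f t) x
      = ∑ i, (Real.exp (t * f i x) / ∑ j, Real.exp (t * f j x)) • gradient (f i) x := by
  have h := (tilted_hasFDerivAt hN f hf t x).fderiv
  simp only [gradient, h, map_sum, map_smul]


lemma cross_term {E : Type*} [NormedAddCommGroup E] [NormedSpace ℝ E] {N : ℕ}
    (w df : Fin N → ℝ) (g : Fin N → E) (gbar : E) (t : ℝ)
    (hwsum : ∑ i, w i = 1) :
    ∑ i, (w i • (t • df i - t * ∑ j, w j * df j)) • g i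
      = t • ∑ i, w i • ((df i - ∑ j, w j * df j) • (g i - gbar)) := by
  set A := ∑ j, w j * df j with hA
  have h0 : ∑ i, (t * (w i * (df i - A))) = 0 := by
    simp only [mul_sub]
    rw [Finset.sum_sub_distrib, ← Finset.mul_sum, ← Finset.mul_sum, ← Finset.sum_mul, hwsum,
      one_mul, ← hA, sub_self]
  have expand : ∀ i : Fin N, t • (w i • ((df i - A) • (g i - gbar)))
      = (w i • (t • df i - t * A)) • g i - (t * (w i * (df i - A))) • gbar := by
    intro i
    simp only [smul_eq_mul, smul_sub, smul_smul]
    have : t * (w i * (df i - A)) = w i * (t * df i - t * A) := by ring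
    rw [this]
  rw [Finset.smul_sum]
  calc ∑ i, (w i • (t • df i - t * A)) • g i
      = ∑ i, ((w i • (t • df i - t * A)) • g i - (t * (w i * (df i - A))) • gbar)
        + (∑ i, (t * (w i * (df i - A)))) • gbar := by
        rw [Finset.sum_sub_distrib, ← Finset.sum_smul]; abel
    _ = ∑ i, t • (w i • ((df i - A) • (g i - gbar))) := by
        rw [h0, zero_smul, add_zero]
        exact (Finset.sum_congr rfl fun i _ => (expand i).symm)

/-- **Tilted Hessian.** If every loss `fᵢ` is twice continuously differentiable, then for any
`t` and `θ` the Hessian of the tilted loss (as a bilinear form applied to a direction `v`)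
equals
`t·Σᵢ wᵢ·(∇fᵢ(θ) − ∇R̃(t;θ))(∇fᵢ(θ) − ∇R̃(t;θ))ᵀ v + Σᵢ wᵢ·∇²fᵢ(θ) v`,
where `wᵢ = exp(t·fᵢ(θ)) / Σⱼ exp(t·fⱼ(θ))` and the rank-one matrix `x xᵀ` acts on `v` as
`⟨x, v⟩ • x`. -/
theorem tilted_hessian {d N : ℕ} (hN : 0 < N)
    (f : Fin N → EuclideanSpace ℝ (Fin d) → ℝ)
    (hf : ∀ i, ContDiff ℝ 2 (f i))
    (t : ℝ) (θ : EuclideanSpace ℝ (Fin d))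
    (w : Fin N → ℝ)
    (hw : ∀ i, w i = Real.exp (t * f i θ) / ∑ j, Real.exp (t * f j θ)) :
    DifferentiableAt ℝ (fun x => gradient (tiltedLoss f t) x) θ ∧
    ∀ v : EuclideanSpace ℝ (Fin d),
      fderiv ℝ (fun x => gradient (tiltedLoss f t) x) θ v =
        t • (∑ i, w i •
          ((inner ℝ (gradient (f i) θ - gradient (tiltedLoss f t) θ) v : ℝ) •
            (gradient (f i) θ - gradient (tiltedLoss f t) θ)))
        + ∑ i, w i • fderiv ℝ (fun x => gradient (f i) x) θ v := by
  have hd : ∀ i, Differentiable ℝ (f i) := fun i => (hf i).differentiable two_ne_zero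
  have hNe : Nonempty (Fin N) := Fin.pos_iff_nonempty.mp hN
  have hSpos : ∀ x : EuclideanSpace ℝ (Fin d), (0:ℝ) < ∑ j, Real.exp (t * f j x) :=
    fun x => Finset.sum_pos (fun j _ => Real.exp_pos _) Finset.univ_nonempty
  have hGfun : (fun x => gradient (tiltedLoss f t) x)
      = fun x => ∑ i, (Real.exp (t * f i x) / ∑ j, Real.exp (t * f j x)) • gradient (f i) x :=
    funext fun x => tilted_gradient_eq hN f hd t x
  have hSd : ∀ x, HasFDerivAt (fun y => ∑ j, Real.exp (t * f j y))
      (∑ j, Real.exp (t * f j x) • (t • fderiv ℝ (f j) x)) x := fun x =>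
    HasFDerivAt.fun_sum fun j _ => ((hd j x).hasFDerivAt.const_mul t).exp
  have hwd : ∀ i, HasFDerivAt (fun y => Real.exp (t * f i y) / ∑ j, Real.exp (t * f j y))
      ((Real.exp (t * f i θ) / ∑ j, Real.exp (t * f j θ)) •
        (t • fderiv ℝ (f i) θ - (∑ j, Real.exp (t * f j θ))⁻¹ •
          (∑ j, Real.exp (t * f j θ) • (t • fderiv ℝ (f j) θ)))) θ := by
    intro i
    have heq : (fun y => Real.exp (t * f i y) / ∑ j, Real.exp (t * f j y))
        = fun y => Real.exp (t * f i y - Real.log (∑ j, Real.exp (t * f j y))) := by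
      funext y
      rw [Real.exp_sub, Real.exp_log (hSpos y)]
    rw [heq]
    have h1 := (((hd i θ).hasFDerivAt.const_mul t).fun_sub ((hSd θ).log (ne_of_gt (hSpos θ)))).exp
    rw [Real.exp_sub, Real.exp_log (hSpos θ)] at h1
    exact h1
  have hgd : ∀ i, DifferentiableAt ℝ (fun x => gradient (f i) x) θ := by
    intro i
    have h1 : ContDiff ℝ 1 (fderiv ℝ (f i)) := (hf i).fderiv_right (le_refl _)
    exact ((InnerProductSpace.toDual ℝ _).symm.toContinuousLinearEquiv.differentiable.comp
      (h1.differentiable one_ne_zero)) θ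
  have hG := HasFDerivAt.fun_sum (u := Finset.univ)
    (fun (i : Fin N) (_ : i ∈ Finset.univ) => (hwd i).fun_smul (hgd i).hasFDerivAt)
  constructor
  · rw [hGfun]; exact hG.differentiableAt
  · intro v
    rw [hGfun, hG.fderiv]
    simp only [ContinuousLinearMap.sum_apply, ContinuousLinearMap.add_apply,
      ContinuousLinearMap.smulRight_apply, ContinuousLinearMap.coe_smul', Pi.smul_apply,
      ContinuousLinearMap.coe_sub', Pi.sub_apply, ContinuousLinearMap.smul_apply]
    have hSne : (∑ j, Real.exp (t * f j θ)) ≠ 0 := ne_of_gt (hSpos θ)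
    have hinner : ∀ i : Fin N, (inner ℝ (gradient (f i) θ) v : ℝ) = fderiv ℝ (f i) θ v :=
      fun i => InnerProductSpace.toDual_symm_apply
    have hwsum : ∑ i, w i = 1 := by
      simp only [hw]; rw [← Finset.sum_div, div_self hSne]
    have hbarv : (inner ℝ (gradient (tiltedLoss f t) θ) v : ℝ)
        = ∑ j, w j * fderiv ℝ (f j) θ v := by
      rw [tilted_gradient_eq hN f hd t θ, sum_inner]
      exact Finset.sum_congr rfl fun j _ => by
        rw [real_inner_smul_left, ← hw j, hinner j]
    have hKey : (∑ j, Real.exp (t * f j θ))⁻¹ •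
          (∑ j, Real.exp (t * f j θ) • t • (fderiv ℝ (f j) θ) v)
        = t * ∑ j, w j * (fderiv ℝ (f j) θ) v := by
      rw [Finset.smul_sum, Finset.mul_sum]
      refine Finset.sum_congr rfl fun j _ => ?_
      rw [hw j]
      simp only [smul_eq_mul]
      field_simp
    simp only [← hw]
    rw [hKey]
    simp only [inner_sub_left, hinner, hbarv]
    rw [Finset.sum_add_distrib, add_comm]
    congr 1
    exact cross_term w (fun i => fderiv ℝ (f i) θ v) (fun i => gradient (f i) θ)
      (gradient (tiltedLoss f t) θ) t hwsum
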